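/- arXiv:1310.2877 — 3 statements merged into one kernel-verified Lean document; each statement's English description precedes it below -/
import Mathlib

section
/- Let p be a prime and s, n, m positive integers with n ≤ m ≤ s. Then the p-adic valuation of M(s,n) is at most the p-adic valuation of M(s,m), where M(s,k) denotes the gcd of all multinomial coefficients over compositions of s into k positive parts. -/
/-- `Msn s k` is the gcd of the multinomial coefficients over all
compositions of `s` into `k` positive parts. -/
def Msn (s k : ℕ) : ℕ :=
  (((Finset.Nat.antidiagonalTuple k s).filter (fun f => ∀ i, 0 < f i)).gcd
    (fun f => Nat.multinomial Finset.univ f))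

open Finset in
/-- Merging the first two parts of a composition divides the multinomial coefficient. -/
lemma multinomial_merge_dvd {j : ℕ} (f : Fin (j + 2) → ℕ) :
    Nat.multinomial Finset.univ (Fin.cons (f 0 + f 1) (fun i => f i.succ.succ) : Fin (j+1) → ℕ)
      ∣ Nat.multinomial Finset.univ f := by
  set g : Fin (j + 1) → ℕ := Fin.cons (f 0 + f 1) (fun i => f i.succ.succ) with hg
  have hsum : ∑ i, g i = ∑ i, f i := by
    rw [Fin.sum_univ_succ g, Fin.sum_univ_succ f, Fin.sum_univ_succ (fun i => f i.succ)]
    simp [hg, add_assoc]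
  have hprod : ((f 0 + f 1).choose (f 0)) * ∏ i, Nat.factorial (f i) = ∏ i, Nat.factorial (g i) := by
    rw [Fin.prod_univ_succ (fun i => Nat.factorial (g i)), Fin.prod_univ_succ (fun i => Nat.factorial (f i)),
      Fin.prod_univ_succ (fun i => Nat.factorial (f i.succ))]
    have : (f 0 + f 1).choose (f 0) * Nat.factorial (f 0) * Nat.factorial (f 1) = Nat.factorial (f 0 + f 1) := by
      rw [Nat.choose_symm_add]
      exact Nat.add_choose_mul_factorial_mul_factorial (f 0) (f 1)
    simp only [hg, Fin.cons_zero, Fin.cons_succ]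
    rw [← this]
    simp only [Fin.succ_zero_eq_one]
    ring
  have spec_f := Nat.multinomial_spec Finset.univ f
  have spec_g := Nat.multinomial_spec Finset.univ g
  have key : Nat.multinomial Finset.univ f =
      (f 0 + f 1).choose (f 0) * Nat.multinomial Finset.univ g := by
    have h : (∏ i, Nat.factorial (f i)) * Nat.multinomial Finset.univ f =
        (∏ i, Nat.factorial (f i)) * ((f 0 + f 1).choose (f 0) * Nat.multinomial Finset.univ g) := by
      rw [spec_f, ← mul_assoc, mul_comm (∏ i, Nat.factorial (f i)), hprod, spec_g, hsum]
    exact Nat.eq_of_mul_eq_mul_left (Finset.prod_pos fun i _ => Nat.factorial_pos _) h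
  exact Dvd.intro_left _ key.symm

/-- `Msn s k` divides `Msn s (k+1)` for `k ≥ 1`. -/
lemma Msn_dvd_succ_s5 (s k : ℕ) (hk : 1 ≤ k) : Msn s k ∣ Msn s (k + 1) := by
  obtain ⟨j, rfl⟩ : ∃ j, k = j + 1 := ⟨k - 1, by omega⟩
  apply Finset.dvd_gcd
  intro f hf
  rw [Finset.mem_filter, Finset.Nat.mem_antidiagonalTuple] at hf
  obtain ⟨hfsum, hfpos⟩ := hf
  set g : Fin (j + 1) → ℕ := Fin.cons (f 0 + f 1) (fun i => f i.succ.succ) with hg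
  have hgsum : ∑ i, g i = s := by
    rw [← hfsum, Fin.sum_univ_succ g, Fin.sum_univ_succ f, Fin.sum_univ_succ (fun i => f i.succ)]
    simp [hg, add_assoc]
  have hgmem : g ∈ (Finset.Nat.antidiagonalTuple (j + 1) s).filter (fun f => ∀ i, 0 < f i) := by
    rw [Finset.mem_filter, Finset.Nat.mem_antidiagonalTuple]
    refine ⟨hgsum, fun i => ?_⟩
    refine Fin.cases ?_ (fun i => ?_) i
    · simpa [hg] using Or.inl (hfpos 0)
    · simpa [hg] using hfpos i.succ.succ
  exact dvd_trans (Finset.gcd_dvd hgmem) (multinomial_merge_dvd f)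

lemma Msn_dvd (s n m : ℕ) (hn : 1 ≤ n) (hnm : n ≤ m) : Msn s n ∣ Msn s m := by
  induction m with
  | zero => omega
  | succ k ih =>
    rcases Nat.lt_or_ge n (k + 1) with h | h
    · exact dvd_trans (ih (by omega)) (Msn_dvd_succ_s5 s k (by omega))
    · have : n = k + 1 := by omega
      subst this; exact dvd_refl _

lemma Msn_ne_zero (s m : ℕ) (hm : 1 ≤ m) (hms : m ≤ s) : Msn s m ≠ 0 := by
  obtain ⟨j, rfl⟩ : ∃ j, m = j + 1 := ⟨m - 1, by omega⟩
  rw [Msn, Ne, Finset.gcd_eq_zero_iff]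
  push_neg
  refine ⟨Fin.cons (s - j) (fun _ => 1), ?_, ?_⟩
  · rw [Finset.mem_filter, Finset.Nat.mem_antidiagonalTuple]
    constructor
    · rw [Fin.sum_univ_succ]
      simp only [Fin.cons_zero, Fin.cons_succ, Finset.sum_const, Finset.card_univ,
        Fintype.card_fin, smul_eq_mul, mul_one]
      omega
    · intro i
      refine Fin.cases ?_ (fun i => ?_) i <;> simp <;> omega
  · exact (Nat.multinomial_pos _ _).ne'

/-- For a prime `p` and positive integers `s, n, m` with `n ≤ m ≤ s`, the `p`-adic valuation
of `M(s,n)` is at most that of `M(s,m)`. -/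
theorem padicValNat_Msn_mono (p s n m : ℕ) (hp : Nat.Prime p) (hs : 0 < s) (hn : 0 < n)
    (hnm : n ≤ m) (hms : m ≤ s) :
    padicValNat p (Msn s n) ≤ padicValNat p (Msn s m) := by
  haveI : Fact p.Prime := ⟨hp⟩
  have hdvd : Msn s n ∣ Msn s m := Msn_dvd s n m hn hnm
  have hne : Msn s m ≠ 0 := Msn_ne_zero s m (by omega) hms
  rw [← padicValNat_dvd_iff_le hne]
  exact dvd_trans (pow_padicValNat_dvd) hdvd
end

section
/- For every prime p and positive integers s, n with n ≤ s, the gcd M(s,n) of multinomial coefficients over compositions of s into n positive parts divides M(s,n+1) whenever n+1 ≤ s. -/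
lemma merge_sum (m : ℕ) (f : Fin (m + 2) → ℕ) :
    ∑ i, (Fin.cons (f 0 + f 1) (fun j : Fin m => f j.succ.succ) : Fin (m+1) → ℕ) i
      = ∑ i, f i := by
  rw [Fin.sum_univ_succ (f := (Fin.cons (f 0 + f 1) _ : Fin (m+1) → ℕ)),
    Fin.sum_univ_succ (f := f), Fin.sum_univ_succ (f := fun i : Fin (m+1) => f i.succ)]
  simp [add_assoc]

lemma merge_multinomial_dvd (m : ℕ) (f : Fin (m + 2) → ℕ) :
    Nat.multinomial Finset.univ
      (Fin.cons (f 0 + f 1) (fun j : Fin m => f j.succ.succ) : Fin (m+1) → ℕ) ∣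
    Nat.multinomial Finset.univ f := by
  set g : Fin (m+1) → ℕ := Fin.cons (f 0 + f 1) (fun j : Fin m => f j.succ.succ) with hg
  refine ⟨(f 0 + f 1).choose (f 0), ?_⟩
  have hprodf : (0:ℕ) < ∏ i, Nat.factorial (f i) := Finset.prod_pos (fun i _ => Nat.factorial_pos _)
  apply Nat.eq_of_mul_eq_mul_left hprodf
  have hf := Nat.multinomial_spec Finset.univ f
  have hgspec := Nat.multinomial_spec Finset.univ g
  have hsum : ∑ i, g i = ∑ i, f i := merge_sum m f
  rw [hf]
  refine Eq.symm ?_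
  -- expand products
  have hpf : ∏ i, Nat.factorial (f i) = Nat.factorial (f 0) * (Nat.factorial (f 1) * ∏ j : Fin m, Nat.factorial (f j.succ.succ)) := by
    rw [Fin.prod_univ_succ (f := fun i => Nat.factorial (f i)),
      Fin.prod_univ_succ (f := fun i : Fin (m+1) => Nat.factorial (f i.succ))]
    norm_num
  have hpg : ∏ i, Nat.factorial (g i) = Nat.factorial (f 0 + f 1) * ∏ j : Fin m, Nat.factorial (f j.succ.succ) := by
    rw [Fin.prod_univ_succ (f := fun i => Nat.factorial (g i))]
    simp [hg]
  have hch : (f 0 + f 1).choose (f 0) * Nat.factorial (f 0) * Nat.factorial (f 1) = Nat.factorial (f 0 + f 1) := by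
    rw [add_comm (f 0) (f 1), mul_right_comm]
    exact Nat.add_choose_mul_factorial_mul_factorial (f 1) (f 0)
  calc (∏ i, Nat.factorial (f i)) * (Nat.multinomial Finset.univ g * (f 0 + f 1).choose (f 0))
      = ((f 0 + f 1).choose (f 0) * Nat.factorial (f 0) * Nat.factorial (f 1) * ∏ j : Fin m, Nat.factorial (f j.succ.succ)) *
          Nat.multinomial Finset.univ g := by rw [hpf]; ring
    _ = (∏ i, Nat.factorial (g i)) * Nat.multinomial Finset.univ g := by rw [hch, hpg]
    _ = Nat.factorial (∑ i, f i) := by rw [hgspec, hsum]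

/-- For every prime `p` and positive integers `s, n` with `n ≤ s` and `n + 1 ≤ s`, the gcd
`M(s,n)` of multinomial coefficients over compositions of `s` into `n` positive parts
divides `M(s,n+1)`. -/
theorem Msn_dvd_succ (p s n : ℕ) (hp : Nat.Prime p) (hs : 0 < s) (hn : 0 < n)
    (hns : n ≤ s) (hns' : n + 1 ≤ s) :
    Msn s n ∣ Msn s (n + 1) := by
  obtain ⟨m, rfl⟩ := Nat.exists_eq_succ_of_ne_zero hn.ne'
  unfold Msn
  apply Finset.dvd_gcd
  intro f hf
  rw [Finset.mem_filter, Finset.Nat.mem_antidiagonalTuple] at hf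
  obtain ⟨hsum, hpos⟩ := hf
  set g : Fin (m+1) → ℕ := Fin.cons (f 0 + f 1) (fun j : Fin m => f j.succ.succ) with hg
  have hgmem : g ∈ (Finset.Nat.antidiagonalTuple (m+1) s).filter (fun f => ∀ i, 0 < f i) := by
    rw [Finset.mem_filter, Finset.Nat.mem_antidiagonalTuple]
    constructor
    · rw [merge_sum m f]; exact hsum
    · intro i
      refine Fin.cases ?_ (fun j => ?_) i
      · simpa [hg] using Nat.add_pos_left (hpos 0) _
      · simpa [hg] using hpos j.succ.succ
  exact dvd_trans (Finset.gcd_dvd hgmem) (merge_multinomial_dvd m f)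
end

section
/- Let A be a commutative ring, p a prime, and s, d positive integers with d < s. Suppose N is an A-module such that for every composition (λ_1,...,λ_{d+1}) of s into d+1 positive parts, the multinomial coefficient C(s;λ_1,...,λ_{d+1}) annihilates N (i.e., multiplication by it is zero on N). Then N is annihilated by M(s,d+1), the gcd of these multinomial coefficients; in particular if N is p-primary, then p^r N = 0 with r = ⌈(d+1-digits_p(s))/(p-1)⌉ when d+1 > digits_p(s). -/
/-- The sum of the digits of `n` in base `p`. -/
def digitSum (p n : ℕ) : ℕ := (Nat.digits p n).sum

/-- The multinomial coefficient `s!/(λ₁!⋯λₙ!)` associated to a list `l = [λ₁,…,λₙ]`. -/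
def listMultinomial (l : List ℕ) : ℕ :=
  Nat.factorial l.sum / (l.map Nat.factorial).prod

lemma listMultinomial_ofFn {n : ℕ} (f : Fin n → ℕ) :
    listMultinomial (List.ofFn f) = Nat.multinomial Finset.univ f := by
  unfold listMultinomial Nat.multinomial
  rw [List.sum_ofFn, List.map_ofFn, List.prod_ofFn]
  rfl

lemma listMultinomial_spec (l : List ℕ) :
    (l.map Nat.factorial).prod * listMultinomial l = Nat.factorial l.sum := by
  have h := Nat.multinomial_spec (Finset.univ : Finset (Fin l.length)) l.get
  have h1 : (List.ofFn l.get).sum = ∑ i, l.get i := List.sum_ofFn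
  have h2 : ((List.ofFn l.get).map Nat.factorial).prod = ∏ i, Nat.factorial (l.get i) := by
    rw [List.map_ofFn, List.prod_ofFn]; rfl
  rw [← listMultinomial_ofFn l.get] at h
  rw [← h2, ← h1, List.ofFn_get] at h
  exact h

lemma prodfac_dvd_factorial_sum (l : List ℕ) :
    (l.map Nat.factorial).prod ∣ Nat.factorial l.sum :=
  ⟨listMultinomial l, (listMultinomial_spec l).symm⟩

lemma gcd_smul_eq_zero {N : Type*} [AddCommGroup N] {x : N} {m n : ℕ}
    (hm : m • x = 0) (hn : n • x = 0) : Nat.gcd m n • x = 0 := by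
  have key : ((Nat.gcd m n : ℤ)) • x = 0 := by
    rw [Nat.gcd_eq_gcd_ab]
    rw [add_smul, mul_comm, mul_smul, mul_comm, mul_smul]
    have hm' : ((m : ℤ)) • x = 0 := by rw [natCast_zsmul]; exact hm
    have hn' : ((n : ℤ)) • x = 0 := by rw [natCast_zsmul]; exact hn
    rw [hm', hn', smul_zero, smul_zero, add_zero]
  rw [← natCast_zsmul]
  exact key

lemma finset_gcd_smul_eq_zero {N : Type*} [AddCommGroup N] {x : N} {ι : Type*}
    [DecidableEq ι] {s : Finset ι} {f : ι → ℕ}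
    (h : ∀ i ∈ s, f i • x = 0) : s.gcd f • x = 0 := by
  induction s using Finset.induction with
  | empty => simpa using (zero_smul ℕ x)
  | @insert a s ha ih =>
    rw [Finset.gcd_insert]
    have h1 : f a • x = 0 := h a (Finset.mem_insert_self a s)
    have h2 : s.gcd f • x = 0 := ih fun i hi => h i (Finset.mem_insert_of_mem hi)
    exact gcd_smul_eq_zero h1 h2

lemma digitSum_pow {p : ℕ} (hp : 2 ≤ p) (e : ℕ) : digitSum p (p ^ e) = 1 := by
  induction e with
  | zero =>
    unfold digitSum
    rw [pow_zero, Nat.digits_def' hp (by norm_num)]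
    rw [Nat.mod_eq_of_lt (by omega), Nat.div_eq_of_lt (by omega)]
    simp
  | succ e ih =>
    unfold digitSum at *
    have hpos : 0 < p ^ (e + 1) := pow_pos (by omega) _
    rw [Nat.digits_def' hp hpos]
    have h1 : p ^ (e + 1) % p = 0 := by
      rw [pow_succ']
      exact Nat.mul_mod_right p _
    have h2 : p ^ (e + 1) / p = p ^ e := by
      rw [pow_succ']
      exact Nat.mul_div_cancel_left _ (by omega)
    rw [h1, h2, List.sum_cons, ih]

/-- Legendre for a prime power factorial: `(p-1) * v_p((p^e)!) + 1 = p^e`. -/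
lemma legendre_pow {p : ℕ} (hp : p.Prime) (e : ℕ) :
    (p - 1) * padicValNat p (Nat.factorial (p ^ e)) + 1 = p ^ e := by
  haveI := Fact.mk hp
  have h := sub_one_mul_padicValNat_factorial (p := p) (p ^ e)
  have hd : (Nat.digits p (p ^ e)).sum = 1 := digitSum_pow hp.two_le e
  rw [hd] at h
  have : 1 ≤ p ^ e := Nat.one_le_iff_ne_zero.mpr (pow_ne_zero _ hp.pos.ne')
  omega

/-- For a list of powers of `p`:
`(p-1) * (sum of valuations of factorials) + length = sum`. -/
lemma legendre_list {p : ℕ} (hp : p.Prime) :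
    ∀ L : List ℕ, (∀ m ∈ L, ∃ i, m = p ^ i) →
      (p - 1) * (L.map (fun m => padicValNat p (Nat.factorial m))).sum + L.length = L.sum := by
  intro L
  induction L with
  | nil => simp
  | cons a L ih =>
    intro h
    obtain ⟨i, hi⟩ := h a List.mem_cons_self
    have ha := legendre_pow hp i
    have hL := ih fun m hm => h m (List.mem_cons_of_mem a hm)
    simp only [List.map_cons, List.sum_cons, List.length_cons]
    rw [Nat.mul_add]
    subst hi
    omega

lemma pow_padic_sum_dvd_prodfac {p : ℕ} (hp : p.Prime) :
    ∀ L : List ℕ,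
      p ^ (L.map (fun m => padicValNat p (Nat.factorial m))).sum ∣
        (L.map Nat.factorial).prod := by
  intro L
  induction L with
  | nil => simp
  | cons a L ih =>
    haveI := Fact.mk hp
    simp only [List.map_cons, List.sum_cons, List.prod_cons]
    rw [pow_add]
    exact mul_dvd_mul pow_padicValNat_dvd ih

/-- From the digits of `s`, a representation of `s` as a list of `digitSum p s` powers of `p`. -/
lemma ofDigits_rep (p : ℕ) :
    ∀ (l : List ℕ) (e : ℕ), ∃ L : List ℕ, L.length = l.sum ∧
      L.sum = Nat.ofDigits p l * p ^ e ∧ ∀ m ∈ L, ∃ i, m = p ^ i := by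
  intro l
  induction l with
  | nil =>
    intro e
    exact ⟨[], by simp, by simp [Nat.ofDigits], by simp⟩
  | cons a l ih =>
    intro e
    obtain ⟨L, h1, h2, h3⟩ := ih (e + 1)
    refine ⟨List.replicate a (p ^ e) ++ L, ?_, ?_, ?_⟩
    · simp [h1]
    · simp only [List.sum_append, List.sum_replicate, smul_eq_mul, h2,
        Nat.ofDigits_cons, Nat.cast_id]
      ring
    · intro m hm
      rcases List.mem_append.mp hm with h | h
      · exact ⟨e, List.eq_of_mem_replicate h⟩
      · exact h3 m h

/-- Growing a representation: `s` is a sum of `digitSum p s + (p-1)*j` powers of `p`,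
as long as that number is at most `s`. -/
lemma rep_grow {p : ℕ} (hp : p.Prime) (s : ℕ) :
    ∀ j : ℕ, digitSum p s + (p - 1) * j ≤ s →
      ∃ L : List ℕ, L.length = digitSum p s + (p - 1) * j ∧ L.sum = s ∧
        ∀ m ∈ L, ∃ i, m = p ^ i := by
  intro j
  induction j with
  | zero =>
    intro _
    obtain ⟨L, h1, h2, h3⟩ := ofDigits_rep p (Nat.digits p s) 0
    refine ⟨L, by simpa [digitSum] using h1, ?_, h3⟩
    rw [h2, pow_zero, mul_one, Nat.ofDigits_digits]
  | succ j ih =>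
    intro hle
    have hp1 : 1 ≤ p - 1 := by have := hp.two_le; omega
    have hle' : digitSum p s + (p - 1) * j ≤ s := by
      have : (p - 1) * j ≤ (p - 1) * (j + 1) := Nat.mul_le_mul_left _ (by omega)
      omega
    obtain ⟨L, h1, h2, h3⟩ := ih hle'
    -- find an element of L that is not 1
    have hlen_lt : L.length < s := by
      have : (p - 1) * (j + 1) = (p - 1) * j + (p - 1) := by ring
      omega
    have hex : ∃ m ∈ L, m ≠ 1 := by
      by_contra hc
      push_neg at hc
      have : L.sum = L.length := by
        have : L = List.replicate L.length 1 := List.eq_replicate_length.mpr hc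
        rw [this]; simp
      omega
    obtain ⟨m, hm, hm1⟩ := hex
    obtain ⟨i, hi⟩ := h3 m hm
    have hi0 : i ≠ 0 := by
      intro h0; subst h0; simp at hi; exact hm1 hi
    obtain ⟨i', rfl⟩ : ∃ i', i = i' + 1 := ⟨i - 1, by omega⟩
    refine ⟨List.replicate p (p ^ i') ++ L.erase m, ?_, ?_, ?_⟩
    · rw [List.length_append, List.length_replicate, List.length_erase_of_mem hm, h1]
      have hL1 : 1 ≤ L.length := List.length_pos_iff.mpr (List.ne_nil_of_mem hm)
      have : (p - 1) * (j + 1) = (p - 1) * j + (p - 1) := by ring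
      have := hp.two_le
      omega
    · rw [List.sum_append, List.sum_replicate, smul_eq_mul]
      have hperm : L.Perm (m :: L.erase m) := List.perm_cons_erase hm
      have hsum : L.sum = m + (L.erase m).sum := by
        rw [hperm.sum_eq]; simp
      have : p * p ^ i' = m := by rw [hi, pow_succ]; ring
      omega
    · intro x hx
      rcases List.mem_append.mp hx with h | h
      · exact ⟨i', List.eq_of_mem_replicate h⟩
      · exact h3 x (List.mem_of_mem_erase h)

/-- If every multinomial coefficient of a composition of `s` into `d+1` positive parts
annihilates the `A`-module `N`, then `N` is annihilated by `M(s,d+1)`; in particular, if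
`N` is `p`-primary and `d+1 > digits_p(s)`, then `p^r` annihilates `N` for
`r = ⌈(d+1-digits_p(s))/(p-1)⌉`. -/
theorem annihilator_Msn (A : Type*) [CommRing A] (N : Type*) [AddCommGroup N] [Module A N]
    (p s d : ℕ) (hp : Nat.Prime p) (hs : 0 < s) (hd : 0 < d) (hds : d < s)
    (hann : ∀ l : List ℕ, l.length = d + 1 → (∀ x ∈ l, 0 < x) → l.sum = s →
      ∀ x : N, (listMultinomial l) • x = 0) :
    (∀ x : N, (Msn s (d + 1)) • x = 0) ∧
    (digitSum p s < d + 1 → (∀ x : N, ∃ k : ℕ, p ^ k • x = 0) →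
      ∀ x : N,
        p ^ (⌈((d : ℚ) + 1 - (digitSum p s : ℚ)) / ((p : ℚ) - 1)⌉.toNat) • x = 0) := by
  haveI := Fact.mk hp
  have hp2 := hp.two_le
  constructor
  · -- Part 1: the gcd annihilates
    intro x
    unfold Msn
    apply finset_gcd_smul_eq_zero
    intro f hf
    rw [Finset.mem_filter] at hf
    obtain ⟨hf1, hf2⟩ := hf
    rw [Finset.Nat.mem_antidiagonalTuple] at hf1
    have h := hann (List.ofFn f) (by simp) ?_ ?_ x
    · rwa [listMultinomial_ofFn] at h
    · intro y hy
      obtain ⟨i, rfl⟩ := List.mem_ofFn.mp hy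
      exact hf2 i
    · rw [List.sum_ofFn]; exact hf1
  · -- Part 2: the p-primary statement
    intro hD htor x
    set D := digitSum p s with hDdef
    set R := (⌈((d : ℚ) + 1 - (D : ℚ)) / ((p : ℚ) - 1)⌉).toNat with hRdef
    -- basic rational facts about R
    have hpq : (0 : ℚ) < (p : ℚ) - 1 := by
      have : (2 : ℚ) ≤ (p : ℚ) := by exact_mod_cast hp2
      linarith
    set q : ℚ := ((d : ℚ) + 1 - (D : ℚ)) / ((p : ℚ) - 1) with hqdef
    have hq_nonneg : 0 ≤ q := by
      apply div_nonneg _ hpq.le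
      have : (D : ℚ) ≤ (d : ℚ) + 1 := by exact_mod_cast hD.le
      linarith
    have hceil_nonneg : 0 ≤ ⌈q⌉ := Int.ceil_nonneg hq_nonneg
    have hRQ : (R : ℚ) = (⌈q⌉ : ℚ) := by
      rw [hRdef]
      exact_mod_cast congrArg (Int.cast : ℤ → ℚ) (Int.toNat_of_nonneg hceil_nonneg)
    have hcast_psub : ((p - 1 : ℕ) : ℚ) = (p : ℚ) - 1 := by
      have : (p - 1 : ℕ) + 1 = p := by omega
      have := congrArg (Nat.cast : ℕ → ℚ) this
      push_cast at this
      linarith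
    -- (i) : d + 1 ≤ D + (p-1) * R
    have hi : d + 1 ≤ D + (p - 1) * R := by
      have h1 : q ≤ (R : ℚ) := by rw [hRQ]; exact Int.le_ceil q
      have h2 : (d : ℚ) + 1 - (D : ℚ) ≤ ((p : ℚ) - 1) * (R : ℚ) := by
        rw [hqdef] at h1
        calc (d : ℚ) + 1 - (D : ℚ) = ((d : ℚ) + 1 - (D : ℚ)) / ((p : ℚ) - 1) * ((p : ℚ) - 1) := by
              field_simp
          _ ≤ (R : ℚ) * ((p : ℚ) - 1) := by
              apply mul_le_mul_of_nonneg_right h1 hpq.le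
          _ = ((p : ℚ) - 1) * (R : ℚ) := by ring
      have h3 : ((d : ℚ) + 1) ≤ (D : ℚ) + ((p - 1 : ℕ) : ℚ) * (R : ℚ) := by
        rw [hcast_psub]; linarith
      exact_mod_cast h3
    -- s ≡ D mod (p - 1); get m with s = D + (p-1) * m
    have hdvd : (p - 1) ∣ (s - D) := by
      rcases Nat.eq_or_lt_of_le hp2 with h2 | h3
    -- p = 2 or p ≥ 3
      · rw [← h2]; simp
      · have hmod : p % (p - 1) = 1 := by
          have h := Nat.add_mod_left (p - 1) 1
          have hp' : p - 1 + 1 = p := by omega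
          rw [hp'] at h
          rw [h]
          exact Nat.mod_eq_of_lt (by omega)
        have := Nat.modEq_digits_sum (p - 1) p hmod s
        exact (Nat.modEq_iff_dvd' (Nat.digit_sum_le p s)).mp this.symm
    have hDle : D ≤ s := Nat.digit_sum_le p s
    obtain ⟨m, hm⟩ := hdvd
    have hsm : s = D + (p - 1) * m := by omega
    -- (ii) : R ≤ m
    have hii : R ≤ m := by
      have h1 : q ≤ (m : ℚ) := by
        rw [hqdef, div_le_iff₀ hpq]
        have : (d : ℚ) + 1 ≤ (D : ℚ) + ((p : ℚ) - 1) * (m : ℚ) := by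
          have hcast : ((D + (p - 1) * m : ℕ) : ℚ) = (D : ℚ) + ((p : ℚ) - 1) * (m : ℚ) := by
            rw [Nat.cast_add, Nat.cast_mul, hcast_psub]
          have h4 : ((d : ℕ) + 1 : ℕ) ≤ (D + (p - 1) * m : ℕ) := by omega
          have h5 : ((d : ℚ) + 1) ≤ ((D + (p - 1) * m : ℕ) : ℚ) := by exact_mod_cast h4
          rw [hcast] at h5
          linarith
        linarith
      have h2 : ⌈q⌉ ≤ (m : ℤ) := Int.ceil_le.mpr (by exact_mod_cast h1)
      rw [hRdef]
      exact_mod_cast Int.toNat_le.mpr h2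
    -- Set S and get the representation
    set S := D + (p - 1) * R with hSdef
    have hSle : S ≤ s := by
      rw [hsm, hSdef]
      have : (p - 1) * R ≤ (p - 1) * m := Nat.mul_le_mul_left _ hii
      omega
    obtain ⟨L, hL1, hL2, hL3⟩ := rep_grow hp s R (by rw [← hSdef]; exact hSle)
    rw [← hSdef] at hL1
    -- Build the composition l
    set l : List ℕ := L.take d ++ [(L.drop d).sum] with hldef
    have hdS : d + 1 ≤ S := hi
    have htake_len : (L.take d).length = d := by
      rw [List.length_take, hL1]; omega
    have hll : l.length = d + 1 := by
      rw [hldef, List.length_append, htake_len]; rfl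
    have hdrop_ne : L.drop d ≠ [] := by
      intro h
      have : (L.drop d).length = L.length - d := List.length_drop
      rw [h, hL1] at this
      simp at this
      omega
    have hLpos : ∀ y ∈ L, 0 < y := by
      intro y hy
      obtain ⟨i, rfl⟩ := hL3 y hy
      exact pow_pos hp.pos i
    have hlpos : ∀ y ∈ l, 0 < y := by
      intro y hy
      rw [hldef, List.mem_append] at hy
      rcases hy with h | h
      · exact hLpos y (List.mem_of_mem_take h)
      · rw [List.mem_singleton] at h
        subst h
        exact List.sum_pos _ (fun z hz => hLpos z (List.mem_of_mem_drop hz)) hdrop_ne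
    have hlsum : l.sum = s := by
      rw [hldef, List.sum_append, List.sum_singleton, List.sum_take_add_sum_drop, hL2]
    -- the multinomial annihilates x
    have hmul : (listMultinomial l) • x = 0 := hann l hll hlpos hlsum x
    -- order of x is a power of p
    obtain ⟨k, hk⟩ := htor x
    have ho1 : addOrderOf x ∣ p ^ k := addOrderOf_dvd_of_nsmul_eq_zero hk
    obtain ⟨j, hjk, hoj⟩ := (Nat.dvd_prime_pow hp).mp ho1
    have ho2 : addOrderOf x ∣ listMultinomial l := addOrderOf_dvd_of_nsmul_eq_zero hmul
    have hpj : p ^ j ∣ listMultinomial l := hoj ▸ ho2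
    -- show j ≤ R by valuation counting
    have hjR : j ≤ R := by
      set V := (L.map (fun m => padicValNat p (Nat.factorial m))).sum with hVdef
      -- p^(j+V) ∣ s!
      have hBP : (L.map Nat.factorial).prod ∣ (l.map Nat.factorial).prod := by
        conv_lhs => rw [← List.take_append_drop d L]
        rw [List.map_append, List.prod_append, hldef, List.map_append, List.prod_append]
        apply mul_dvd_mul_left
        simp only [List.map_singleton, List.prod_singleton]
        exact prodfac_dvd_factorial_sum (L.drop d)
      have hdvd2 : p ^ (j + V) ∣ Nat.factorial s := by
        calc p ^ (j + V) = p ^ j * p ^ V := pow_add p j V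
          _ ∣ listMultinomial l * (L.map Nat.factorial).prod :=
              mul_dvd_mul hpj (pow_padic_sum_dvd_prodfac hp L)
          _ ∣ listMultinomial l * (l.map Nat.factorial).prod := mul_dvd_mul_left _ hBP
          _ = Nat.factorial l.sum := by rw [mul_comm]; exact listMultinomial_spec l
          _ = Nat.factorial s := by rw [hlsum]
      have hle : j + V ≤ padicValNat p (Nat.factorial s) :=
        (padicValNat_dvd_iff_le (Nat.factorial_ne_zero s)).mp hdvd2
      -- Legendre computations
      have hLeg1 : (p - 1) * padicValNat p (Nat.factorial s) = s - D := by
        have := sub_one_mul_padicValNat_factorial (p := p) s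
        exact this
      have hLeg2 : (p - 1) * V + S = s := by
        have := legendre_list hp L hL3
        rw [← hVdef, hL1, hL2] at this
        exact this
      -- combine
      have hmul_le : (p - 1) * (j + V) ≤ (p - 1) * padicValNat p (Nat.factorial s) :=
        Nat.mul_le_mul_left _ hle
      rw [Nat.mul_add] at hmul_le
      rw [hLeg1] at hmul_le
      -- (p-1)*j + (p-1)*V ≤ s - D, with (p-1)*V = s - S, S = D + (p-1)*R
      have hfin : (p - 1) * j ≤ (p - 1) * R := by omega
      exact Nat.le_of_mul_le_mul_left hfin (by omega)
    -- conclude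
    have : addOrderOf x ∣ p ^ R := by
      rw [hoj]
      exact pow_dvd_pow p hjR
    exact addOrderOf_dvd_iff_nsmul_eq_zero.mp this
end
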